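/- Let A_l ∈ ℂ^{n×n} (1 ≤ l ≤ N) be complex matrices and B_l, C_l ∈ ℝ^{n×n} (1 ≤ l ≤ N) be matrices with nonnegative entries such that |[A_l]_{ij}| ≤ √([B_l]_{ij} · [C_l]_{ij}) for all i, j, l. Let A = A₁A₂⋯A_N, B = B₁B₂⋯B_N, C = C₁C₂⋯C_N. Then: (i) |[A]_{ij}| ≤ √([B]_{ij} · [C]_{ij}) for all i, j; (ii) ρ(A) ≤ √(ρ(B) ρ(C)), where ρ denotes the spectral radius. Moreover, if max(ρ(B), ρ(C)) < 1, then I_n − A, I_n − B and I_n − C are invertible and ‖(I_n − A)^{-1}‖_∞ ≤ √( ‖(I_n − B)^{-1}‖_∞ · ‖(I_n − C)^{-1}‖_∞ ) and ‖(I_n − A)^{-1}‖₁ ≤ √( ‖(I_n − B)^{-1}‖₁ · ‖(I_n − C)^{-1}‖₁ ). -/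

import Mathlib

/-!
Statement 11 (Lemma: entrywise domination, spectral radii and norms of products).
-/

open Matrix
open scoped ENNReal

noncomputable section

/-- Spectral radius of a complex square matrix. -/
noncomputable def specRad {n : ℕ} (M : Matrix (Fin n) (Fin n) ℂ) : ℝ≥0∞ :=
  spectralRadius ℂ M

/-- Maximum row-sum norm `‖M‖_∞` of a square matrix. -/
noncomputable def rowNorm {n : ℕ} {α : Type*} [SeminormedAddGroup α]
    (M : Matrix (Fin n) (Fin n) α) : ℝ :=
  ⨆ i, ∑ j, ‖M i j‖

/-- Maximum column-sum norm `‖M‖₁` of a square matrix. -/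
noncomputable def colNorm {n : ℕ} {α : Type*} [SeminormedAddGroup α]
    (M : Matrix (Fin n) (Fin n) α) : ℝ :=
  ⨆ j, ∑ i, ‖M i j‖

/- ### Auxiliary material -/

open Filter Finset
open scoped NNReal Topology

set_option maxHeartbeats 1000000

attribute [local instance] Matrix.linftyOpSeminormedAddCommGroup
  Matrix.linftyOpNormedAddCommGroup Matrix.linftyOpNormedRing Matrix.linftyOpNormedAlgebra

namespace Stmt11Aux

lemma cs_sum {ι : Type*} (s : Finset ι) (b c : ι → ℝ) (hb : ∀ i, 0 ≤ b i) (hc : ∀ i, 0 ≤ c i) :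
    ∑ i ∈ s, Real.sqrt (b i * c i) ≤ Real.sqrt ((∑ i ∈ s, b i) * (∑ i ∈ s, c i)) := by
  calc ∑ i ∈ s, Real.sqrt (b i * c i) = ∑ i ∈ s, Real.sqrt (b i) * Real.sqrt (c i) := by
        simp [Real.sqrt_mul (hb _)]
    _ ≤ Real.sqrt (∑ i ∈ s, b i) * Real.sqrt (∑ i ∈ s, c i) := Real.sum_sqrt_mul_sqrt_le s hb hc
    _ = _ := (Real.sqrt_mul (Finset.sum_nonneg fun i _ => hb i) _).symm

lemma dom_sum {ι : Type*} (s : Finset ι) (a : ι → ℂ) (b c : ι → ℝ)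
    (hb : ∀ i, 0 ≤ b i) (hc : ∀ i, 0 ≤ c i) (h : ∀ i ∈ s, ‖a i‖ ≤ Real.sqrt (b i * c i)) :
    ‖∑ i ∈ s, a i‖ ≤ Real.sqrt ((∑ i ∈ s, b i) * (∑ i ∈ s, c i)) :=
  (norm_sum_le _ _).trans ((Finset.sum_le_sum h).trans (cs_sum s b c hb hc))

variable {n : ℕ}

lemma nonneg_mul {B B' : Matrix (Fin n) (Fin n) ℝ} (hB : ∀ i j, 0 ≤ B i j)
    (hB' : ∀ i j, 0 ≤ B' i j) : ∀ i j, 0 ≤ (B * B') i j := fun i j => by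
  rw [Matrix.mul_apply]; exact Finset.sum_nonneg fun k _ => mul_nonneg (hB i k) (hB' k j)

lemma dom_mul {A A' : Matrix (Fin n) (Fin n) ℂ} {B C B' C' : Matrix (Fin n) (Fin n) ℝ}
    (hB : ∀ i j, 0 ≤ B i j) (hC : ∀ i j, 0 ≤ C i j)
    (hB' : ∀ i j, 0 ≤ B' i j) (hC' : ∀ i j, 0 ≤ C' i j)
    (h : ∀ i j, ‖A i j‖ ≤ Real.sqrt (B i j * C i j))
    (h' : ∀ i j, ‖A' i j‖ ≤ Real.sqrt (B' i j * C' i j)) :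
    ∀ i j, ‖(A * A') i j‖ ≤ Real.sqrt ((B * B') i j * (C * C') i j) := fun i j => by
  simp only [Matrix.mul_apply]
  refine dom_sum _ _ (fun k => B i k * B' k j) (fun k => C i k * C' k j)
    (fun k => mul_nonneg (hB i k) (hB' k j)) (fun k => mul_nonneg (hC i k) (hC' k j))
    (fun k _ => ?_)
  rw [norm_mul]
  calc ‖A i k‖ * ‖A' k j‖ ≤ Real.sqrt (B i k * C i k) * Real.sqrt (B' k j * C' k j) :=
        mul_le_mul (h i k) (h' k j) (norm_nonneg _) (Real.sqrt_nonneg _)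
    _ = Real.sqrt (B i k * B' k j * (C i k * C' k j)) := by
        rw [← Real.sqrt_mul (mul_nonneg (hB i k) (hC i k))]; ring_nf

/-- entry norm is at most the row sum, which is at most the linfty norm -/
lemma rowsum_le_norm {α : Type*} [SeminormedAddCommGroup α] (M : Matrix (Fin n) (Fin n) α)
    (i : Fin n) : ∑ j, ‖M i j‖ ≤ ‖M‖ := by
  rw [Matrix.linfty_opNorm_def]
  have : (∑ j, ‖M i j‖₊ : ℝ≥0) ≤ (Finset.univ.sup fun i => ∑ j, ‖M i j‖₊) :=
    Finset.le_sup (f := fun i => ∑ j, ‖M i j‖₊) (Finset.mem_univ i)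
  calc ∑ j, ‖M i j‖ = ((∑ j, ‖M i j‖₊ : ℝ≥0) : ℝ) := by push_cast; rfl
    _ ≤ _ := NNReal.coe_le_coe.mpr this

lemma entry_le_norm {α : Type*} [SeminormedAddCommGroup α] (M : Matrix (Fin n) (Fin n) α)
    (i j : Fin n) : ‖M i j‖ ≤ ‖M‖ :=
  (Finset.single_le_sum (f := fun j => ‖M i j‖) (fun _ _ => norm_nonneg _)
    (Finset.mem_univ j)).trans (rowsum_le_norm M i)

lemma norm_le_of_rowsums {α : Type*} [SeminormedAddCommGroup α] (M : Matrix (Fin n) (Fin n) α)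
    {t : ℝ} (ht : 0 ≤ t) (h : ∀ i, ∑ j, ‖M i j‖ ≤ t) : ‖M‖ ≤ t := by
  rw [Matrix.linfty_opNorm_def]
  have key : (Finset.univ.sup fun i => ∑ j, ‖M i j‖₊) ≤ (⟨t, ht⟩ : ℝ≥0) := by
    refine Finset.sup_le fun i _ => ?_
    apply NNReal.coe_le_coe.mp
    calc ((∑ j, ‖M i j‖₊ : ℝ≥0) : ℝ) = ∑ j, ‖M i j‖ := by push_cast; rfl
      _ ≤ t := h i
  exact_mod_cast key

lemma dom_norm {A : Matrix (Fin n) (Fin n) ℂ} {B C : Matrix (Fin n) (Fin n) ℝ}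
    (hB : ∀ i j, 0 ≤ B i j) (hC : ∀ i j, 0 ≤ C i j)
    (h : ∀ i j, ‖A i j‖ ≤ Real.sqrt (B i j * C i j)) :
    ‖A‖ ≤ Real.sqrt (‖B‖ * ‖C‖) := by
  refine norm_le_of_rowsums A (Real.sqrt_nonneg _) fun i => ?_
  calc ∑ j, ‖A i j‖ ≤ ∑ j, Real.sqrt (B i j * C i j) :=
        Finset.sum_le_sum fun j _ => h i j
    _ ≤ Real.sqrt ((∑ j, B i j) * (∑ j, C i j)) := cs_sum _ _ _ (hB i) (hC i)
    _ ≤ Real.sqrt (‖B‖ * ‖C‖) := by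
        refine Real.sqrt_le_sqrt (mul_le_mul ?_ ?_ (Finset.sum_nonneg fun j _ => hC i j)
          (norm_nonneg _))
        · calc ∑ j, B i j = ∑ j, ‖B i j‖ := by
                simp_rw [Real.norm_eq_abs]
                exact Finset.sum_congr rfl fun j _ => (abs_of_nonneg (hB i j)).symm
            _ ≤ ‖B‖ := rowsum_le_norm B i
        · calc ∑ j, C i j = ∑ j, ‖C i j‖ := by
                simp_rw [Real.norm_eq_abs]
                exact Finset.sum_congr rfl fun j _ => (abs_of_nonneg (hC i j)).symm
            _ ≤ ‖C‖ := rowsum_le_norm C i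

lemma nnnorm_map_ofReal (B : Matrix (Fin n) (Fin n) ℝ) :
    ‖B.map (Complex.ofReal)‖₊ = ‖B‖₊ := by
  simp only [Matrix.linfty_opNNNorm_def, Matrix.map_apply, Complex.nnnorm_real]

lemma norm_map_ofReal (B : Matrix (Fin n) (Fin n) ℝ) :
    ‖B.map (Complex.ofReal)‖ = ‖B‖ := congrArg NNReal.toReal (nnnorm_map_ofReal B)

lemma summable_of_ev_geom {f : ℕ → ℝ} (hf : ∀ k, 0 ≤ f k) {r : ℝ} (hr0 : 0 ≤ r) (hr : r < 1)
    (h : ∀ᶠ k in atTop, f k ≤ r ^ k) : Summable f := by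
  obtain ⟨K, hK⟩ := eventually_atTop.mp h
  rw [← summable_nat_add_iff K]
  refine Summable.of_nonneg_of_le (fun k => hf _) (fun k => hK _ (Nat.le_add_left K k)) ?_
  have : Summable fun k : ℕ => r ^ K * r ^ k :=
    (summable_geometric_of_lt_one hr0 hr).mul_left _
  simpa [pow_add, mul_comm] using this

/-- Neumann series for a matrix over `ℝ` or `ℂ` whose power norms are summable. -/
lemma neumann {K : Type*} [RCLike K] (M : Matrix (Fin n) (Fin n) K)
    (hsum : Summable fun k : ℕ => ‖M ^ k‖) :
    (∀ i j, Summable fun k : ℕ => ‖(M ^ k) i j‖) ∧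
      (1 - M)⁻¹ = Matrix.of (fun i j => ∑' k : ℕ, (M ^ k) i j) := by
  have hnorm : ∀ i j, Summable fun k : ℕ => ‖(M ^ k) i j‖ := fun i j =>
    Summable.of_nonneg_of_le (fun _ => norm_nonneg _) (fun k => entry_le_norm _ i j) hsum
  have hent : ∀ i j, Summable fun k : ℕ => (M ^ k) i j := fun i j => (hnorm i j).of_norm
  have htend : ∀ i j, Tendsto (fun k : ℕ => (M ^ k) i j) atTop (𝓝 0) := fun i j =>
    squeeze_zero_norm (fun k => entry_le_norm (M ^ k) i j) hsum.tendsto_atTop_zero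
  have hmul : (1 - M) * Matrix.of (fun i j => ∑' k : ℕ, (M ^ k) i j) = 1 := by
    ext i j
    rw [Matrix.mul_apply]
    have step1 : ∀ k : Fin n, (1 - M) i k * ∑' m : ℕ, (M ^ m) k j
        = ∑' m : ℕ, (1 - M) i k * (M ^ m) k j := fun k => (tsum_mul_left).symm
    simp only [Matrix.of_apply, step1]
    rw [← Summable.tsum_finsetSum (fun k _ => ((hent k j).mul_left _))]
    have step2 : ∀ m : ℕ, (∑ k : Fin n, (1 - M) i k * (M ^ m) k j)
        = (M ^ m) i j - (M ^ (m + 1)) i j := by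
      intro m
      have h1 : (∑ k : Fin n, (1 - M) i k * (M ^ m) k j) = ((1 - M) * M ^ m) i j :=
        (Matrix.mul_apply).symm
      rw [h1, Matrix.sub_mul, Matrix.one_mul, Matrix.sub_apply, pow_succ']
    simp only [step2]
    have hg : Summable fun m : ℕ => (M ^ m) i j - (M ^ (m + 1)) i j :=
      (hent i j).sub ((summable_nat_add_iff (f := fun k : ℕ => (M ^ k) i j) 1).mpr (hent i j))
    have hs : HasSum (fun m : ℕ => (M ^ m) i j - (M ^ (m + 1)) i j) ((M ^ 0) i j) := by
      rw [hasSum_iff_tendsto_nat_of_summable_norm (summable_norm_iff.mpr hg)]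
      have : ∀ Kk : ℕ, ∑ m ∈ Finset.range Kk, ((M ^ m) i j - (M ^ (m + 1)) i j)
          = (M ^ 0) i j - (M ^ Kk) i j := fun Kk =>
        Finset.sum_range_sub' (fun m => (M ^ m) i j) Kk
      simp only [this]
      simpa only [sub_zero] using (tendsto_const_nhds (x := (M ^ 0) i j)).sub (htend i j)
    rw [hs.tsum_eq, pow_zero]
  exact ⟨hnorm, Matrix.inv_eq_right_inv hmul⟩

lemma pow_nonneg_entries {Q : Matrix (Fin n) (Fin n) ℝ} (hQ : ∀ i j, 0 ≤ Q i j) (k : ℕ) :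
    ∀ i j, 0 ≤ (Q ^ k) i j := by
  induction k with
  | zero => intro i j; rw [pow_zero]; rcases eq_or_ne i j with h | h <;>
      simp [Matrix.one_apply, h]
  | succ k ih => rw [pow_succ]; exact nonneg_mul ih hQ

lemma pow_dom {P : Matrix (Fin n) (Fin n) ℂ} {Q R : Matrix (Fin n) (Fin n) ℝ}
    (hQ : ∀ i j, 0 ≤ Q i j) (hR : ∀ i j, 0 ≤ R i j)
    (h : ∀ i j, ‖P i j‖ ≤ Real.sqrt (Q i j * R i j)) (k : ℕ) :
    ∀ i j, ‖(P ^ k) i j‖ ≤ Real.sqrt ((Q ^ k) i j * (R ^ k) i j) := by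
  induction k with
  | zero =>
      intro i j
      simp only [pow_zero]
      rcases eq_or_ne i j with hij | hij <;> simp [Matrix.one_apply, hij]
  | succ k ih =>
      simp only [pow_succ]
      exact dom_mul (pow_nonneg_entries hQ k) (pow_nonneg_entries hR k) hQ hR ih h

lemma map_ofReal_pow (Q : Matrix (Fin n) (Fin n) ℝ) (k : ℕ) :
    (Q.map (Complex.ofReal)) ^ k = (Q ^ k).map (Complex.ofReal) := by
  have := map_pow (Complex.ofRealHom.mapMatrix :
    Matrix (Fin n) (Fin n) ℝ →+* Matrix (Fin n) (Fin n) ℂ) Q k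
  simp only [RingHom.mapMatrix_apply] at this
  exact this.symm

lemma pow_norm_dom {P : Matrix (Fin n) (Fin n) ℂ} {Q R : Matrix (Fin n) (Fin n) ℝ}
    (hQ : ∀ i j, 0 ≤ Q i j) (hR : ∀ i j, 0 ≤ R i j)
    (h : ∀ i j, ‖P i j‖ ≤ Real.sqrt (Q i j * R i j)) (k : ℕ) :
    ‖P ^ k‖ ≤ Real.sqrt (‖Q ^ k‖ * ‖R ^ k‖) :=
  dom_norm (pow_nonneg_entries hQ k) (pow_nonneg_entries hR k) (pow_dom hQ hR h k)

/-- key ENNReal inequality per k -/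
lemma pow_nnnorm_dom_ennreal {P : Matrix (Fin n) (Fin n) ℂ} {Q R : Matrix (Fin n) (Fin n) ℝ}
    (hQ : ∀ i j, 0 ≤ Q i j) (hR : ∀ i j, 0 ≤ R i j)
    (h : ∀ i j, ‖P i j‖ ≤ Real.sqrt (Q i j * R i j)) (k : ℕ) :
    (‖P ^ k‖₊ : ℝ≥0∞) ≤ ((‖Q ^ k‖₊ : ℝ≥0∞) * (‖R ^ k‖₊ : ℝ≥0∞)) ^ (1 / 2 : ℝ) := by
  have hnn : ‖P ^ k‖₊ ≤ NNReal.sqrt (‖Q ^ k‖₊ * ‖R ^ k‖₊) := by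
    rw [← NNReal.coe_le_coe, Real.coe_sqrt, NNReal.coe_mul]
    exact pow_norm_dom hQ hR h k
  calc (‖P ^ k‖₊ : ℝ≥0∞) ≤ ((NNReal.sqrt (‖Q ^ k‖₊ * ‖R ^ k‖₊) : ℝ≥0) : ℝ≥0∞) :=
        ENNReal.coe_le_coe.mpr hnn
    _ = ((‖Q ^ k‖₊ * ‖R ^ k‖₊ : ℝ≥0) : ℝ≥0∞) ^ (1 / 2 : ℝ) := by
        rw [NNReal.sqrt_eq_rpow, ENNReal.coe_rpow_of_nonneg _ (by norm_num)]
    _ = _ := by rw [ENNReal.coe_mul]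

lemma spec_le_of_dom [Nonempty (Fin n)] {P : Matrix (Fin n) (Fin n) ℂ}
    {Q R : Matrix (Fin n) (Fin n) ℝ}
    (hQ : ∀ i j, 0 ≤ Q i j) (hR : ∀ i j, 0 ≤ R i j)
    (h : ∀ i j, ‖P i j‖ ≤ Real.sqrt (Q i j * R i j)) :
    spectralRadius ℂ P ≤ (spectralRadius ℂ (Q.map Complex.ofReal) *
      spectralRadius ℂ (R.map Complex.ofReal)) ^ (1 / 2 : ℝ) := by
  set Qc := Q.map Complex.ofReal with hQc'
  set Rc := R.map Complex.ofReal with hRc'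
  have hP := spectrum.pow_nnnorm_pow_one_div_tendsto_nhds_spectralRadius P
  have hQt := spectrum.pow_nnnorm_pow_one_div_tendsto_nhds_spectralRadius Qc
  have hRt := spectrum.pow_nnnorm_pow_one_div_tendsto_nhds_spectralRadius Rc
  have hQfin : spectralRadius ℂ Qc ≠ ⊤ :=
    ((spectrum.spectralRadius_le_nnnorm Qc).trans_lt ENNReal.coe_lt_top).ne
  have hRfin : spectralRadius ℂ Rc ≠ ⊤ :=
    ((spectrum.spectralRadius_le_nnnorm Rc).trans_lt ENNReal.coe_lt_top).ne
  have hRHS : Tendsto (fun k : ℕ => ((‖Qc ^ k‖₊ : ℝ≥0∞) ^ (1 / (k : ℝ)) *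
      (‖Rc ^ k‖₊ : ℝ≥0∞) ^ (1 / (k : ℝ))) ^ (1 / 2 : ℝ)) atTop
      (𝓝 ((spectralRadius ℂ Qc * spectralRadius ℂ Rc) ^ (1 / 2 : ℝ))) :=
    (ENNReal.continuous_rpow_const.tendsto _).comp
      (ENNReal.Tendsto.mul hQt (Or.inr hRfin) hRt (Or.inr hQfin))
  refine le_of_tendsto_of_tendsto' hP hRHS fun k => ?_
  have hQk : (‖Qc ^ k‖₊ : ℝ≥0∞) = (‖Q ^ k‖₊ : ℝ≥0∞) := by
    rw [hQc', map_ofReal_pow, nnnorm_map_ofReal]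
  have hRk : (‖Rc ^ k‖₊ : ℝ≥0∞) = (‖R ^ k‖₊ : ℝ≥0∞) := by
    rw [hRc', map_ofReal_pow, nnnorm_map_ofReal]
  rw [hQk, hRk]
  calc (‖P ^ k‖₊ : ℝ≥0∞) ^ (1 / (k : ℝ))
      ≤ (((‖Q ^ k‖₊ : ℝ≥0∞) * (‖R ^ k‖₊ : ℝ≥0∞)) ^ (1 / 2 : ℝ)) ^ (1 / (k : ℝ)) :=
        ENNReal.rpow_le_rpow (pow_nnnorm_dom_ennreal hQ hR h k) (by positivity)
    _ = ((‖Q ^ k‖₊ : ℝ≥0∞) ^ (1 / (k : ℝ)) * (‖R ^ k‖₊ : ℝ≥0∞) ^ (1 / (k : ℝ))) ^ (1 / 2 : ℝ) := by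
        rw [← ENNReal.rpow_mul, mul_comm (1 / 2 : ℝ), ENNReal.rpow_mul,
          ENNReal.mul_rpow_of_nonneg _ _ (by positivity)]

lemma ev_geom {M : Matrix (Fin n) (Fin n) ℂ} (hρ : spectralRadius ℂ M < 1) :
    ∃ r : ℝ≥0, r < 1 ∧ ∀ᶠ k : ℕ in atTop, ‖M ^ k‖ ≤ (r : ℝ) ^ k := by
  obtain ⟨t, ht1, ht2⟩ := exists_between hρ
  have htne : t ≠ ⊤ := (ht2.trans_le le_top).ne
  lift t to ℝ≥0 using htne
  refine ⟨t, by exact_mod_cast ht2, ?_⟩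
  have hev :=
    (spectrum.pow_nnnorm_pow_one_div_tendsto_nhds_spectralRadius M).eventually_lt_const ht1
  filter_upwards [hev, eventually_ge_atTop 1] with k hk hk1
  have hkne : (k : ℝ) ≠ 0 := Nat.cast_ne_zero.mpr (by omega)
  have h1 : ((‖M ^ k‖₊ : ℝ≥0∞) ^ (1 / (k : ℝ))) ^ (k : ℕ) ≤ (t : ℝ≥0∞) ^ (k : ℕ) :=
    pow_le_pow_left₀ zero_le hk.le k
  rw [← ENNReal.rpow_natCast ((‖M ^ k‖₊ : ℝ≥0∞) ^ (1 / (k : ℝ))), ← ENNReal.rpow_mul,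
    one_div_mul_cancel hkne, ENNReal.rpow_one] at h1
  have h2 : (‖M ^ k‖₊ : ℝ≥0∞) ≤ ((t ^ k : ℝ≥0) : ℝ≥0∞) := by
    rw [ENNReal.coe_pow]; exact h1
  have h3 : ‖M ^ k‖₊ ≤ t ^ k := ENNReal.coe_le_coe.mp h2
  calc ‖M ^ k‖ = ((‖M ^ k‖₊ : ℝ≥0) : ℝ) := rfl
    _ ≤ ((t ^ k : ℝ≥0) : ℝ) := NNReal.coe_le_coe.mpr h3
    _ = (t : ℝ) ^ k := by push_cast; rfl

lemma isUnit_one_sub_of_spec_lt {M : Matrix (Fin n) (Fin n) ℂ}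
    (hρ : spectralRadius ℂ M < 1) : IsUnit (1 - M) := by
  have h1 : (1 : ℂ) ∈ resolventSet ℂ M := by
    apply spectrum.mem_resolventSet_of_spectralRadius_lt
    simpa using hρ
  simpa [spectrum.mem_resolventSet_iff] using h1

lemma one_sub_map_ofReal (Q : Matrix (Fin n) (Fin n) ℝ) :
    (1 : Matrix (Fin n) (Fin n) ℂ) - Q.map Complex.ofReal
      = ((1 : Matrix (Fin n) (Fin n) ℝ) - Q).map Complex.ofReal := by
  have := map_sub (Complex.ofRealHom.mapMatrix :
    Matrix (Fin n) (Fin n) ℝ →+* Matrix (Fin n) (Fin n) ℂ) 1 Q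
  simp only [_root_.map_one, RingHom.mapMatrix_apply] at this
  exact this.symm

lemma isUnit_real_of_complex {Q : Matrix (Fin n) (Fin n) ℝ}
    (h : IsUnit ((1 : Matrix (Fin n) (Fin n) ℂ) - Q.map Complex.ofReal)) :
    IsUnit ((1 : Matrix (Fin n) (Fin n) ℝ) - Q) := by
  rw [Matrix.isUnit_iff_isUnit_det] at h ⊢
  rw [one_sub_map_ofReal] at h
  have hdet : ((1 : Matrix (Fin n) (Fin n) ℝ) - Q).map Complex.ofReal
      = (Complex.ofRealHom : ℝ →+* ℂ).mapMatrix ((1 : Matrix (Fin n) (Fin n) ℝ) - Q) := rfl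
  rw [hdet, ← RingHom.map_det] at h
  rw [isUnit_iff_ne_zero] at h ⊢
  exact fun h0 => h (by rw [h0]; simp)

lemma tsum_cs {b c : ℕ → ℝ} (hb : ∀ k, 0 ≤ b k) (hc : ∀ k, 0 ≤ c k)
    (hbs : Summable b) (hcs : Summable c)
    (hs : Summable fun k => Real.sqrt (b k * c k)) :
    ∑' k, Real.sqrt (b k * c k) ≤ Real.sqrt ((∑' k, b k) * (∑' k, c k)) := by
  refine Summable.tsum_le_of_sum_range_le hs fun K => ?_
  calc ∑ k ∈ range K, Real.sqrt (b k * c k)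
      ≤ Real.sqrt ((∑ k ∈ range K, b k) * (∑ k ∈ range K, c k)) := cs_sum _ _ _ hb hc
    _ ≤ Real.sqrt ((∑' k, b k) * (∑' k, c k)) := by
        refine Real.sqrt_le_sqrt (mul_le_mul ?_ ?_ (Finset.sum_nonneg fun k _ => hc k)
          (tsum_nonneg hb))
        · exact Summable.sum_le_tsum _ (fun k _ => hb k) hbs
        · exact Summable.sum_le_tsum _ (fun k _ => hc k) hcs

/-- row-norm domination from entrywise domination. -/
lemma rowNorm_dom_aux {X : Matrix (Fin n) (Fin n) ℂ} {Y Z : Matrix (Fin n) (Fin n) ℝ}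
    (hY : ∀ i j, 0 ≤ Y i j) (hZ : ∀ i j, 0 ≤ Z i j)
    (h : ∀ i j, ‖X i j‖ ≤ Real.sqrt (Y i j * Z i j)) :
    (⨆ i, ∑ j, ‖X i j‖) ≤ Real.sqrt ((⨆ i, ∑ j, ‖Y i j‖) * (⨆ i, ∑ j, ‖Z i j‖)) := by
  rcases Nat.eq_zero_or_pos n with hn | hn
  · subst hn
    simp [Real.iSup_of_isEmpty]
  have : Nonempty (Fin n) := Fin.pos_iff_nonempty.mp hn
  have i0 : Fin n := Classical.arbitrary _
  have hYnn : 0 ≤ ⨆ i, ∑ j, ‖Y i j‖ :=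
    le_trans (Finset.sum_nonneg fun j _ => norm_nonneg (Y i0 j))
      (le_ciSup (Set.Finite.bddAbove (Set.finite_range fun i => ∑ j, ‖Y i j‖)) i0)
  have hZnn : 0 ≤ ⨆ i, ∑ j, ‖Z i j‖ :=
    le_trans (Finset.sum_nonneg fun j _ => norm_nonneg (Z i0 j))
      (le_ciSup (Set.Finite.bddAbove (Set.finite_range fun i => ∑ j, ‖Z i j‖)) i0)
  refine ciSup_le fun i => ?_
  calc ∑ j, ‖X i j‖ ≤ ∑ j, Real.sqrt (Y i j * Z i j) := Finset.sum_le_sum fun j _ => h i j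
    _ ≤ Real.sqrt ((∑ j, Y i j) * (∑ j, Z i j)) := cs_sum _ _ _ (hY i) (hZ i)
    _ ≤ _ := by
        refine Real.sqrt_le_sqrt (mul_le_mul ?_ ?_ (Finset.sum_nonneg fun j _ => hZ i j) hYnn)
        · calc ∑ j, Y i j = ∑ j, ‖Y i j‖ :=
                Finset.sum_congr rfl fun j _ => (Real.norm_of_nonneg (hY i j)).symm
            _ ≤ ⨆ i, ∑ j, ‖Y i j‖ := le_ciSup (f := fun i => ∑ j, ‖Y i j‖)
                (Set.Finite.bddAbove (Set.finite_range _)) i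
        · calc ∑ j, Z i j = ∑ j, ‖Z i j‖ :=
                Finset.sum_congr rfl fun j _ => (Real.norm_of_nonneg (hZ i j)).symm
            _ ≤ ⨆ i, ∑ j, ‖Z i j‖ := le_ciSup (f := fun i => ∑ j, ‖Z i j‖)
                (Set.Finite.bddAbove (Set.finite_range _)) i

lemma sqrt_prod_le_max (a b : ℝ≥0∞) : (a * b) ^ (1 / 2 : ℝ) ≤ max a b := by
  calc (a * b) ^ (1 / 2 : ℝ) ≤ (max a b * max a b) ^ (1 / 2 : ℝ) :=
        ENNReal.rpow_le_rpow (mul_le_mul' (le_max_left a b) (le_max_right a b)) (by norm_num)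
    _ = max a b := by
        rw [← sq, ← ENNReal.rpow_natCast (max a b) 2, ← ENNReal.rpow_mul]
        norm_num

lemma prod_facts {N : ℕ} (A : Fin N → Matrix (Fin n) (Fin n) ℂ)
    (B C : Fin N → Matrix (Fin n) (Fin n) ℝ)
    (hB : ∀ l i j, 0 ≤ B l i j) (hC : ∀ l i j, 0 ≤ C l i j)
    (hdom : ∀ l i j, ‖A l i j‖ ≤ Real.sqrt (B l i j * C l i j)) :
    (∀ i j, 0 ≤ (List.ofFn B).prod i j) ∧ (∀ i j, 0 ≤ (List.ofFn C).prod i j) ∧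
      (∀ i j, ‖(List.ofFn A).prod i j‖ ≤
        Real.sqrt ((List.ofFn B).prod i j * (List.ofFn C).prod i j)) := by
  induction N with
  | zero =>
      simp only [List.ofFn_zero, List.prod_nil]
      refine ⟨?_, ?_, ?_⟩ <;> intro i j <;> rcases eq_or_ne i j with hij | hij <;>
        simp [Matrix.one_apply, hij]
  | succ N ih =>
      obtain ⟨h1, h2, h3⟩ := ih (fun l => A l.succ) (fun l => B l.succ) (fun l => C l.succ)
        (fun l => hB l.succ) (fun l => hC l.succ) (fun l => hdom l.succ)
      simp only [List.ofFn_succ, List.prod_cons]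
      exact ⟨nonneg_mul (hB 0) h1, nonneg_mul (hC 0) h2,
        dom_mul (hB 0) (hC 0) h1 h2 (hdom 0) h3⟩

end Stmt11Aux

open Stmt11Aux

/-- If `|[A_l]_{ij}| ≤ √([B_l]_{ij} [C_l]_{ij})` entrywise, with
`B_l, C_l` nonnegative, then the products `A = A₁⋯A_N`, `B = B₁⋯B_N`, `C = C₁⋯C_N`
satisfy the same domination, `ρ(A) ≤ √(ρ(B)ρ(C))`, and if `max(ρ(B), ρ(C)) < 1`
then `I − A`, `I − B`, `I − C` are invertible with
`‖(I−A)⁻¹‖_∞ ≤ √(‖(I−B)⁻¹‖_∞ ‖(I−C)⁻¹‖_∞)` and similarly for `‖·‖₁`. -/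
theorem product_domination_spectral_radius
    (n N : ℕ) (hN : 0 < N)
    (A : Fin N → Matrix (Fin n) (Fin n) ℂ)
    (B C : Fin N → Matrix (Fin n) (Fin n) ℝ)
    (hB : ∀ l i j, 0 ≤ B l i j) (hC : ∀ l i j, 0 ≤ C l i j)
    (hdom : ∀ l i j, ‖A l i j‖ ≤ Real.sqrt (B l i j * C l i j)) :
    (∀ i j, ‖(List.ofFn A).prod i j‖ ≤
        Real.sqrt ((List.ofFn B).prod i j * (List.ofFn C).prod i j)) ∧
    specRad (List.ofFn A).prod ≤
      (specRad ((List.ofFn B).prod.map (Complex.ofReal)) *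
        specRad ((List.ofFn C).prod.map (Complex.ofReal))) ^ (1 / 2 : ℝ) ∧
    (max (specRad ((List.ofFn B).prod.map (Complex.ofReal)))
        (specRad ((List.ofFn C).prod.map (Complex.ofReal))) < 1 →
      IsUnit ((1 : Matrix (Fin n) (Fin n) ℂ) - (List.ofFn A).prod) ∧
      IsUnit ((1 : Matrix (Fin n) (Fin n) ℝ) - (List.ofFn B).prod) ∧
      IsUnit ((1 : Matrix (Fin n) (Fin n) ℝ) - (List.ofFn C).prod) ∧
      rowNorm ((1 - (List.ofFn A).prod)⁻¹) ≤
        Real.sqrt (rowNorm ((1 - (List.ofFn B).prod)⁻¹) *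
          rowNorm ((1 - (List.ofFn C).prod)⁻¹)) ∧
      colNorm ((1 - (List.ofFn A).prod)⁻¹) ≤
        Real.sqrt (colNorm ((1 - (List.ofFn B).prod)⁻¹) *
          colNorm ((1 - (List.ofFn C).prod)⁻¹))) := by
  obtain ⟨hQnn, hRnn, hdomP⟩ := prod_facts A B C hB hC hdom
  set P := (List.ofFn A).prod with hP'
  set Q := (List.ofFn B).prod with hQ'
  set R := (List.ofFn C).prod with hR'
  rcases Nat.eq_zero_or_pos n with hn | hn
  · -- trivial case `n = 0`
    subst hn
    have hsub : Subsingleton (Matrix (Fin 0) (Fin 0) ℂ) := by infer_instance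
    refine ⟨hdomP, ?_, fun _ => ?_⟩
    · have h0 : specRad P = 0 := spectrum.SpectralRadius.of_subsingleton P
      rw [h0]; exact zero_le
    · refine ⟨isUnit_of_subsingleton _, isUnit_of_subsingleton _, isUnit_of_subsingleton _,
        ?_, ?_⟩ <;>
      · simp only [rowNorm, colNorm, Real.iSup_of_isEmpty]
        positivity
  have hne : Nonempty (Fin n) := Fin.pos_iff_nonempty.mp hn
  have hspec : spectralRadius ℂ P ≤ (spectralRadius ℂ (Q.map Complex.ofReal) *
      spectralRadius ℂ (R.map Complex.ofReal)) ^ (1 / 2 : ℝ) :=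
    spec_le_of_dom hQnn hRnn hdomP
  refine ⟨hdomP, hspec, fun hmax => ?_⟩
  have hQlt : spectralRadius ℂ (Q.map Complex.ofReal) < 1 :=
    lt_of_le_of_lt (le_max_left _ _) hmax
  have hRlt : spectralRadius ℂ (R.map Complex.ofReal) < 1 :=
    lt_of_le_of_lt (le_max_right _ _) hmax
  have hPlt : spectralRadius ℂ P < 1 :=
    lt_of_le_of_lt (hspec.trans (sqrt_prod_le_max _ _)) hmax
  -- invertibility
  have hUA : IsUnit ((1 : Matrix (Fin n) (Fin n) ℂ) - P) := isUnit_one_sub_of_spec_lt hPlt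
  have hUB : IsUnit ((1 : Matrix (Fin n) (Fin n) ℝ) - Q) :=
    isUnit_real_of_complex (isUnit_one_sub_of_spec_lt hQlt)
  have hUC : IsUnit ((1 : Matrix (Fin n) (Fin n) ℝ) - R) :=
    isUnit_real_of_complex (isUnit_one_sub_of_spec_lt hRlt)
  -- geometric bounds
  obtain ⟨rP, hrP1, hrPev⟩ := ev_geom hPlt
  obtain ⟨rQ, hrQ1, hrQev⟩ := ev_geom hQlt
  obtain ⟨rR, hrR1, hrRev⟩ := ev_geom hRlt
  have hQnormeq : ∀ k : ℕ, ‖(Q.map Complex.ofReal) ^ k‖ = ‖Q ^ k‖ := fun k => by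
    rw [map_ofReal_pow, norm_map_ofReal]
  have hRnormeq : ∀ k : ℕ, ‖(R.map Complex.ofReal) ^ k‖ = ‖R ^ k‖ := fun k => by
    rw [map_ofReal_pow, norm_map_ofReal]
  have hrQev' : ∀ᶠ k : ℕ in atTop, ‖Q ^ k‖ ≤ (rQ : ℝ) ^ k := by
    filter_upwards [hrQev] with k hk; rw [← hQnormeq k]; exact hk
  have hrRev' : ∀ᶠ k : ℕ in atTop, ‖R ^ k‖ ≤ (rR : ℝ) ^ k := by
    filter_upwards [hrRev] with k hk; rw [← hRnormeq k]; exact hk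
  -- summability
  have hsumP : Summable fun k : ℕ => ‖P ^ k‖ :=
    summable_of_ev_geom (fun _ => norm_nonneg _) rP.coe_nonneg (by exact_mod_cast hrP1) hrPev
  have hsumQ : Summable fun k : ℕ => ‖Q ^ k‖ :=
    summable_of_ev_geom (fun _ => norm_nonneg _) rQ.coe_nonneg (by exact_mod_cast hrQ1) hrQev'
  have hsumR : Summable fun k : ℕ => ‖R ^ k‖ :=
    summable_of_ev_geom (fun _ => norm_nonneg _) rR.coe_nonneg (by exact_mod_cast hrR1) hrRev'
  obtain ⟨hnormP, hinvP⟩ := neumann P hsumP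
  obtain ⟨hnormQ, hinvQ⟩ := neumann Q hsumQ
  obtain ⟨hnormR, hinvR⟩ := neumann R hsumR
  -- entry nonnegativity of real inverses
  have hSQnn : ∀ i j, 0 ≤ ((1 : Matrix (Fin n) (Fin n) ℝ) - Q)⁻¹ i j := fun i j => by
    rw [hinvQ]
    exact tsum_nonneg fun k => pow_nonneg_entries hQnn k i j
  have hSRnn : ∀ i j, 0 ≤ ((1 : Matrix (Fin n) (Fin n) ℝ) - R)⁻¹ i j := fun i j => by
    rw [hinvR]
    exact tsum_nonneg fun k => pow_nonneg_entries hRnn k i j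
  -- entrywise domination of inverses
  set rM : ℝ≥0 := max rQ rR with hrM'
  have hrM1 : (rM : ℝ) < 1 := by
    rw [hrM']; push_cast; exact max_lt (by exact_mod_cast hrQ1) (by exact_mod_cast hrR1)
  have hsqrt_sum : ∀ i j, Summable fun k : ℕ =>
      Real.sqrt ((Q ^ k) i j * (R ^ k) i j) := by
    intro i j
    refine summable_of_ev_geom (fun k => Real.sqrt_nonneg _) rM.coe_nonneg hrM1 ?_
    filter_upwards [hrQev', hrRev'] with k hkQ hkR
    have hq : (Q ^ k) i j ≤ (rM : ℝ) ^ k := by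
      calc (Q ^ k) i j ≤ ‖(Q ^ k) i j‖ := le_abs_self _
        _ ≤ ‖Q ^ k‖ := entry_le_norm _ i j
        _ ≤ (rQ : ℝ) ^ k := hkQ
        _ ≤ (rM : ℝ) ^ k := by
            refine pow_le_pow_left₀ rQ.coe_nonneg ?_ k
            exact_mod_cast le_max_left rQ rR
    have hr : (R ^ k) i j ≤ (rM : ℝ) ^ k := by
      calc (R ^ k) i j ≤ ‖(R ^ k) i j‖ := le_abs_self _
        _ ≤ ‖R ^ k‖ := entry_le_norm _ i j
        _ ≤ (rR : ℝ) ^ k := hkR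
        _ ≤ (rM : ℝ) ^ k := by
            refine pow_le_pow_left₀ rR.coe_nonneg ?_ k
            exact_mod_cast le_max_right rQ rR
    calc Real.sqrt ((Q ^ k) i j * (R ^ k) i j)
        ≤ Real.sqrt ((rM : ℝ) ^ k * (rM : ℝ) ^ k) := by
          refine Real.sqrt_le_sqrt (mul_le_mul hq hr (pow_nonneg_entries hRnn k i j)
            (pow_nonneg rM.coe_nonneg k))
      _ = (rM : ℝ) ^ k := Real.sqrt_mul_self (pow_nonneg rM.coe_nonneg k)
  have hSdom : ∀ i j, ‖((1 : Matrix (Fin n) (Fin n) ℂ) - P)⁻¹ i j‖ ≤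
      Real.sqrt (((1 : Matrix (Fin n) (Fin n) ℝ) - Q)⁻¹ i j *
        ((1 : Matrix (Fin n) (Fin n) ℝ) - R)⁻¹ i j) := by
    intro i j
    rw [hinvP, hinvQ, hinvR]
    simp only [Matrix.of_apply]
    have hbs : Summable fun k : ℕ => (Q ^ k) i j := (hnormQ i j).of_norm
    have hcs : Summable fun k : ℕ => (R ^ k) i j := (hnormR i j).of_norm
    calc ‖∑' k : ℕ, (P ^ k) i j‖ ≤ ∑' k : ℕ, ‖(P ^ k) i j‖ :=
          norm_tsum_le_tsum_norm (hnormP i j)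
      _ ≤ ∑' k : ℕ, Real.sqrt ((Q ^ k) i j * (R ^ k) i j) :=
          Summable.tsum_le_tsum (fun k => pow_dom hQnn hRnn hdomP k i j) (hnormP i j) (hsqrt_sum i j)
      _ ≤ Real.sqrt ((∑' k : ℕ, (Q ^ k) i j) * (∑' k : ℕ, (R ^ k) i j)) :=
          tsum_cs (fun k => pow_nonneg_entries hQnn k i j)
            (fun k => pow_nonneg_entries hRnn k i j) hbs hcs (hsqrt_sum i j)
  refine ⟨hUA, hUB, hUC, ?_, ?_⟩
  · exact rowNorm_dom_aux hSQnn hSRnn hSdom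
  · have := rowNorm_dom_aux (X := (((1 : Matrix (Fin n) (Fin n) ℂ) - P)⁻¹)ᵀ)
      (Y := (((1 : Matrix (Fin n) (Fin n) ℝ) - Q)⁻¹)ᵀ)
      (Z := (((1 : Matrix (Fin n) (Fin n) ℝ) - R)⁻¹)ᵀ)
      (fun i j => hSQnn j i) (fun i j => hSRnn j i) (fun i j => hSdom j i)
    simpa [colNorm, Matrix.transpose_apply] using this

end
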